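/- arXiv:2605.18717 — 3 statements merged into one kernel-verified Lean document; each statement's English description precedes it below -/
import Mathlib

section
/- Let p be a prime, and let J, W, Z ∈ L¹(ℤ_p) with ‖J‖₁ ∈ (0,1), and let φ : ℂ → ℂ be Lipschitz with constant L_φ such that ‖J‖₁ + L_φ‖W‖₁ < 1. Then the map T defined by (Tf)(x) = (J * f)(x) − ∫_{ℤ_p} W(x−y) φ(f(y)) dy − Z(x) has a unique fixed point in L¹(ℤ_p). -/
open MeasureTheory
open scoped ENNReal NNReal Convolution

set_option maxHeartbeats 1000000

noncomputable instance (p : ℕ) [Fact p.Prime] : MeasurableSpace ℤ_[p] := borel _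
instance (p : ℕ) [Fact p.Prime] : BorelSpace ℤ_[p] := ⟨rfl⟩

/-- The normalized Haar measure on the compact additive group ℤ_p (total mass 1). -/
noncomputable def haarZp (p : ℕ) [Fact p.Prime] : Measure ℤ_[p] :=
  Measure.addHaarMeasure ⟨⟨Set.univ, isCompact_univ⟩, by simp⟩

/-- The operator (Tf)(x) = (J*f)(x) - ∫ W(x-y) φ(f(y)) dy - Z(x). -/
noncomputable def Tmap (p : ℕ) [Fact p.Prime] (J W Z : ℤ_[p] → ℂ) (φ : ℂ → ℂ)
    (f : ℤ_[p] → ℂ) (x : ℤ_[p]) : ℂ :=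
  (∫ y, J (x - y) * f y ∂(haarZp p)) - (∫ y, W (x - y) * φ (f y) ∂(haarZp p)) - Z x

section Aux

variable (p : ℕ) [Fact p.Prime]

instance : (haarZp p).IsAddHaarMeasure := Measure.isAddHaarMeasure_addHaarMeasure _

instance : IsProbabilityMeasure (haarZp p) :=
  ⟨by simpa [haarZp] using Measure.addHaarMeasure_self (K₀ := (⟨⟨Set.univ, isCompact_univ⟩, by simp⟩ : TopologicalSpace.PositiveCompacts ℤ_[p]))⟩

variable {p}

/-- The convolution written as `x ↦ ∫ K (x - y) * f y` agrees with mathlib's convolution. -/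
lemma conv_eq (K f : ℤ_[p] → ℂ) :
    (fun x => ∫ y, K (x - y) * f y ∂(haarZp p))
      = (f ⋆[ContinuousLinearMap.mul ℂ ℂ, haarZp p] K) := by
  funext x
  rw [convolution_def]
  exact integral_congr_ae (Filter.Eventually.of_forall fun y => by
    simp [ContinuousLinearMap.mul_apply', mul_comm])

lemma conv_integrable {K f : ℤ_[p] → ℂ} (hK : Integrable K (haarZp p))
    (hf : Integrable f (haarZp p)) :
    Integrable (fun x => ∫ y, K (x - y) * f y ∂(haarZp p)) (haarZp p) := by
  rw [conv_eq]
  exact Integrable.integrable_convolution (ContinuousLinearMap.mul ℂ ℂ) hf hK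

lemma conv_eLpNorm_le {K f : ℤ_[p] → ℂ} (hK : Integrable K (haarZp p))
    (hf : AEStronglyMeasurable f (haarZp p)) :
    eLpNorm (fun x => ∫ y, K (x - y) * f y ∂(haarZp p)) 1 (haarZp p)
      ≤ eLpNorm K 1 (haarZp p) * eLpNorm f 1 (haarZp p) := by
  set μ := haarZp p
  have hKprod : AEMeasurable (fun z : ℤ_[p] × ℤ_[p] => (‖K (z.1 - z.2)‖₊ : ℝ≥0∞)) (μ.prod μ) :=
    (hK.1.comp_quasiMeasurePreserving
      (quasiMeasurePreserving_sub_of_right_invariant μ μ)).enorm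
  have hfprod : AEMeasurable (fun z : ℤ_[p] × ℤ_[p] => (‖f z.2‖₊ : ℝ≥0∞)) (μ.prod μ) :=
    hf.comp_snd.enorm
  simp only [eLpNorm_one_eq_lintegral_enorm]
  calc ∫⁻ x, ‖∫ y, K (x - y) * f y ∂μ‖₊ ∂μ
      ≤ ∫⁻ x, ∫⁻ y, ‖K (x - y)‖₊ * ‖f y‖₊ ∂μ ∂μ := by
        refine lintegral_mono fun x => ?_
        refine le_trans (enorm_integral_le_lintegral_enorm _) (le_of_eq ?_)
        refine lintegral_congr fun y => ?_
        simp [nnnorm_mul, ENNReal.coe_mul, enorm_eq_nnnorm]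
    _ = ∫⁻ y, ∫⁻ x, ‖K (x - y)‖₊ * ‖f y‖₊ ∂μ ∂μ :=
        lintegral_lintegral_swap (hKprod.mul hfprod)
    _ = ∫⁻ y, (∫⁻ x, ‖K (x - y)‖₊ ∂μ) * ‖f y‖₊ ∂μ := by
        refine lintegral_congr fun y => ?_
        exact lintegral_mul_const'' _
          (hK.1.enorm.comp_quasiMeasurePreserving
            (measurePreserving_sub_right μ y).quasiMeasurePreserving)
    _ = ∫⁻ y, (∫⁻ x, ‖K x‖₊ ∂μ) * ‖f y‖₊ ∂μ := by
        refine lintegral_congr fun y => ?_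
        rw [lintegral_sub_right_eq_self (fun x => (‖K x‖₊ : ℝ≥0∞)) y]
    _ = (∫⁻ x, ‖K x‖₊ ∂μ) * ∫⁻ y, ‖f y‖₊ ∂μ :=
        lintegral_const_mul' _ _ hK.2.ne

/-- `Tmap` only depends on the a.e. class of `f`. -/
lemma Tmap_congr_ae {J W Z : ℤ_[p] → ℂ} {φ : ℂ → ℂ} {f g : ℤ_[p] → ℂ}
    (h : f =ᵐ[haarZp p] g) : Tmap p J W Z φ f = Tmap p J W Z φ g := by
  funext x
  unfold Tmap
  have h1 : (fun y => J (x - y) * f y) =ᵐ[haarZp p] fun y => J (x - y) * g y :=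
    h.mono fun y hy => by simp [hy]
  have h2 : (fun y => W (x - y) * φ (f y)) =ᵐ[haarZp p] fun y => W (x - y) * φ (g y) :=
    h.mono fun y hy => by simp [hy]
  rw [integral_congr_ae h1, integral_congr_ae h2]

end Aux

theorem stmt0 (p : ℕ) [Fact p.Prime] (J W Z : ℤ_[p] → ℂ)
    (hJ : Integrable J (haarZp p)) (hW : Integrable W (haarZp p))
    (hZ : Integrable Z (haarZp p))
    (Lφ : NNReal) (φ : ℂ → ℂ) (hφ : LipschitzWith Lφ φ)
    (hJpos : 0 < ∫ x, ‖J x‖ ∂(haarZp p))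
    (hcontr : (∫ x, ‖J x‖ ∂(haarZp p)) + (Lφ : ℝ) * ∫ x, ‖W x‖ ∂(haarZp p) < 1) :
    ∃ f : ℤ_[p] → ℂ, (Integrable f (haarZp p) ∧ f =ᵐ[haarZp p] Tmap p J W Z φ f) ∧
      ∀ g : ℤ_[p] → ℂ, Integrable g (haarZp p) → g =ᵐ[haarZp p] Tmap p J W Z φ g →
        g =ᵐ[haarZp p] f := by
  set μ := haarZp p with hμdef
  -- Lipschitz composition is integrable
  have hφc : ∀ {f : ℤ_[p] → ℂ}, Integrable f μ → Integrable (fun y => φ (f y)) μ := by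
    intro f hf
    refine Integrable.mono' ((integrable_const ‖φ 0‖).add (hf.norm.const_mul (Lφ : ℝ)))
      (hφ.continuous.comp_aestronglyMeasurable hf.1)
      (Filter.Eventually.of_forall fun y => ?_)
    calc ‖φ (f y)‖ ≤ ‖φ 0‖ + ‖φ (f y) - φ 0‖ := by
          simpa using norm_add_le (φ 0) (φ (f y) - φ 0)
      _ ≤ ‖φ 0‖ + (Lφ : ℝ) * ‖f y - 0‖ := by
          gcongr
          simpa [dist_eq_norm] using hφ.dist_le_mul (f y) 0
      _ = ‖φ 0‖ + (Lφ : ℝ) * ‖f y‖ := by simp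
  have hTint : ∀ {f : ℤ_[p] → ℂ}, Integrable f μ → Integrable (Tmap p J W Z φ f) μ := by
    intro f hf
    exact ((conv_integrable hJ hf).sub (conv_integrable hW (hφc hf))).sub hZ
  -- The operator on L¹
  let Φ : (ℤ_[p] →₁[μ] ℂ) → (ℤ_[p] →₁[μ] ℂ) := fun h =>
    (hTint (L1.integrable_coeFn h)).toL1 _
  have hΦcoe : ∀ h : ℤ_[p] →₁[μ] ℂ, (Φ h : ℤ_[p] → ℂ) =ᵐ[μ] Tmap p J W Z φ h :=
    fun h => Integrable.coeFn_toL1 _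
  -- contraction constants
  have heJ : eLpNorm J 1 μ = ENNReal.ofReal (∫ x, ‖J x‖ ∂μ) := by
    rw [eLpNorm_one_eq_lintegral_enorm, integral_norm_eq_lintegral_enorm hJ.1,
      ENNReal.ofReal_toReal hJ.2.ne]
  have heW : eLpNorm W 1 μ = ENNReal.ofReal (∫ x, ‖W x‖ ∂μ) := by
    rw [eLpNorm_one_eq_lintegral_enorm, integral_norm_eq_lintegral_enorm hW.1,
      ENNReal.ofReal_toReal hW.2.ne]
  set Kc : NNReal := (∫ x, ‖J x‖ ∂μ).toNNReal + Lφ * (∫ x, ‖W x‖ ∂μ).toNNReal with hKc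
  have hKcoe : (Kc : ℝ≥0∞) = eLpNorm J 1 μ + (Lφ : ℝ≥0∞) * eLpNorm W 1 μ := by
    rw [heJ, heW, hKc]
    simp only [ENNReal.ofReal, ENNReal.coe_add, ENNReal.coe_mul]
  have hK1 : Kc < 1 := by
    rw [← NNReal.coe_lt_coe, hKc, NNReal.coe_add, NNReal.coe_mul, NNReal.coe_one,
      Real.coe_toNNReal _ hJpos.le,
      Real.coe_toNNReal _ (integral_nonneg fun x => norm_nonneg _)]
    exact hcontr
  -- the key estimate
  have hest : ∀ (f g : ℤ_[p] → ℂ), Integrable f μ → Integrable g μ →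
      eLpNorm (Tmap p J W Z φ f - Tmap p J W Z φ g) 1 μ
        ≤ (Kc : ℝ≥0∞) * eLpNorm (f - g) 1 μ := by
    intro f g hf hg
    -- rewrite the difference
    have hfg : Integrable (f - g) μ := hf.sub hg
    have hφfg : Integrable ((fun y => φ (f y)) - fun y => φ (g y)) μ := (hφc hf).sub (hφc hg)
    have hA := conv_integrable hJ hfg
    have hB := conv_integrable hW hφfg
    have hpt : Tmap p J W Z φ f - Tmap p J W Z φ g
        =ᵐ[μ] (fun x => ∫ y, J (x - y) * ((f - g) y) ∂μ)
          - fun x => ∫ y, W (x - y) * (((fun y => φ (f y)) - fun y => φ (g y)) y) ∂μ := by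
      have h1 : ∀ᵐ x ∂μ, Integrable (fun y => f y * J (x - y)) μ :=
        Integrable.ae_convolution_exists (L := ContinuousLinearMap.mul ℂ ℂ) hf hJ
      have h2 : ∀ᵐ x ∂μ, Integrable (fun y => g y * J (x - y)) μ :=
        Integrable.ae_convolution_exists (L := ContinuousLinearMap.mul ℂ ℂ) hg hJ
      have h3 : ∀ᵐ x ∂μ, Integrable (fun y => φ (f y) * W (x - y)) μ :=
        Integrable.ae_convolution_exists (L := ContinuousLinearMap.mul ℂ ℂ) (hφc hf) hW
      have h4 : ∀ᵐ x ∂μ, Integrable (fun y => φ (g y) * W (x - y)) μ :=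
        Integrable.ae_convolution_exists (L := ContinuousLinearMap.mul ℂ ℂ) (hφc hg) hW
      filter_upwards [h1, h2, h3, h4] with x h1 h2 h3 h4
      have e1 : ∀ {u : ℤ_[p] → ℂ}, Integrable (fun y => u y * J (x - y)) μ →
          Integrable (fun y => J (x - y) * u y) μ := by
        intro u hu
        simpa [mul_comm] using hu
      have e3 : ∀ {u : ℤ_[p] → ℂ}, Integrable (fun y => u y * W (x - y)) μ →
          Integrable (fun y => W (x - y) * u y) μ := by
        intro u hu
        simpa [mul_comm] using hu
      simp only [Pi.sub_apply, Tmap]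
      rw [← hμdef]
      rw [integral_congr_ae (Filter.Eventually.of_forall
          (fun y => mul_sub (J (x - y)) (f y) (g y))),
        integral_congr_ae (Filter.Eventually.of_forall
          (fun y => mul_sub (W (x - y)) (φ (f y)) (φ (g y)))),
        integral_sub (e1 h1) (e1 h2), integral_sub (e3 h3) (e3 h4)]
      ring
    rw [eLpNorm_congr_ae hpt]
    have hsub := eLpNorm_sub_le (p := 1) hA.1 hB.1 le_rfl
    refine le_trans hsub ?_
    have hbA : eLpNorm (fun x => ∫ y, J (x - y) * ((f - g) y) ∂μ) 1 μ
        ≤ eLpNorm J 1 μ * eLpNorm (f - g) 1 μ := conv_eLpNorm_le hJ hfg.1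
    have hφlip : eLpNorm ((fun y => φ (f y)) - fun y => φ (g y)) 1 μ
        ≤ (Lφ : ℝ≥0∞) * eLpNorm (f - g) 1 μ := by
      simp only [eLpNorm_one_eq_lintegral_enorm]
      rw [← lintegral_const_mul' _ _ ENNReal.coe_ne_top]
      refine lintegral_mono fun y => ?_
      simp only [Pi.sub_apply]
      calc (‖φ (f y) - φ (g y)‖₊ : ℝ≥0∞) = edist (φ (f y)) (φ (g y)) := by
            rw [edist_eq_enorm_sub, enorm_eq_nnnorm]
        _ ≤ (Lφ : ℝ≥0∞) * edist (f y) (g y) := hφ.edist_le_mul _ _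
        _ = (Lφ : ℝ≥0∞) * ‖f y - g y‖₊ := by rw [edist_eq_enorm_sub, enorm_eq_nnnorm]
    have hbB : eLpNorm (fun x => ∫ y, W (x - y) * (((fun y => φ (f y)) - fun y => φ (g y)) y) ∂μ)
          1 μ ≤ eLpNorm W 1 μ * ((Lφ : ℝ≥0∞) * eLpNorm (f - g) 1 μ) :=
      le_trans (conv_eLpNorm_le hW hφfg.1) (mul_le_mul_right hφlip _)
    calc eLpNorm (fun x => ∫ y, J (x - y) * ((f - g) y) ∂μ) 1 μ
          + eLpNorm (fun x => ∫ y, W (x - y) * (((fun y => φ (f y)) - fun y => φ (g y)) y) ∂μ) 1 μ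
        ≤ eLpNorm J 1 μ * eLpNorm (f - g) 1 μ
          + eLpNorm W 1 μ * ((Lφ : ℝ≥0∞) * eLpNorm (f - g) 1 μ) := add_le_add hbA hbB
      _ = (Kc : ℝ≥0∞) * eLpNorm (f - g) 1 μ := by rw [hKcoe]; ring
  -- Φ is Lipschitz with constant Kc
  have hΦlip : LipschitzWith Kc Φ := by
    refine LipschitzWith.of_dist_le_mul fun h₁ h₂ => ?_
    have hf := L1.integrable_coeFn h₁
    have hg := L1.integrable_coeFn h₂
    rw [Lp.dist_def, Lp.dist_def]
    have hc : eLpNorm (⇑(Φ h₁) - ⇑(Φ h₂)) 1 μ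
        = eLpNorm (Tmap p J W Z φ h₁ - Tmap p J W Z φ h₂) 1 μ := by
      refine eLpNorm_congr_ae ?_
      filter_upwards [hΦcoe h₁, hΦcoe h₂] with x hx1 hx2
      simp [hx1, hx2]
    rw [hc]
    have := hest _ _ hf hg
    have hfin : eLpNorm (⇑h₁ - ⇑h₂) 1 μ ≠ ∞ := by
      have := Lp.eLpNorm_ne_top (h₁ - h₂)
      rwa [eLpNorm_congr_ae (Lp.coeFn_sub h₁ h₂)] at this
    calc (eLpNorm (Tmap p J W Z φ ⇑h₁ - Tmap p J W Z φ ⇑h₂) 1 μ).toReal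
        ≤ ((Kc : ℝ≥0∞) * eLpNorm (⇑h₁ - ⇑h₂) 1 μ).toReal := by
          refine ENNReal.toReal_mono ?_ this
          exact ENNReal.mul_ne_top ENNReal.coe_ne_top hfin
      _ = (Kc : ℝ) * (eLpNorm (⇑h₁ - ⇑h₂) 1 μ).toReal := by
          rw [ENNReal.toReal_mul, ENNReal.coe_toReal]
    -- this establishes the bound
  have hcw : ContractingWith Kc Φ := ⟨hK1, hΦlip⟩
  -- fixed point
  let h : ℤ_[p] →₁[μ] ℂ := hcw.fixedPoint Φ
  have hfix : Φ h = h := hcw.fixedPoint_isFixedPt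
  refine ⟨⇑h, ⟨L1.integrable_coeFn h, ?_⟩, ?_⟩
  · calc (⇑h : ℤ_[p] → ℂ) =ᵐ[μ] ⇑(Φ h) := by rw [hfix]
      _ =ᵐ[μ] Tmap p J W Z φ ⇑h := hΦcoe h
  · intro g hg hgT
    have hgl : (hg.toL1 g : ℤ_[p] → ℂ) =ᵐ[μ] g := Integrable.coeFn_toL1 hg
    have hfixg : Φ (hg.toL1 g) = hg.toL1 g := by
      refine Lp.ext ?_
      calc (Φ (hg.toL1 g) : ℤ_[p] → ℂ) =ᵐ[μ] Tmap p J W Z φ ⇑(hg.toL1 g) := hΦcoe _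
        _ = Tmap p J W Z φ g := Tmap_congr_ae hgl
        _ =ᵐ[μ] g := hgT.symm
        _ =ᵐ[μ] ⇑(hg.toL1 g) := hgl.symm
    have : hg.toL1 g = h := hcw.fixedPoint_unique hfixg
    calc g =ᵐ[μ] ⇑(hg.toL1 g) := hgl.symm
      _ = ⇑h := by rw [this]
end

section
/- Let p be a prime, M ≥ 1 an integer, and F : [0,1] → ℂ continuous, viewed as a radial function on ℤ_p. Then F(|·|_p) * Ω(p^{M+1}|·|_p) = (∫_{p^{M+1}ℤ_p} F(|y|_p) dy) · Ω(p^{M+1}|x|_p) + p^{-M-1} Σ_{j=0}^{M} F(p^{-j}) 1_{S_{-j}}(x), where Ω(p^{M+1}|x|_p) is the indicator of the ball {|x|_p ≤ p^{-M-1}} and 1_{S_{-j}} is the indicator of the sphere {|x|_p = p^{-j}}. -/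
open MeasureTheory
open scoped ENNReal NNReal

/-- The radial function `x ↦ F(|x|_p)` on ℤ_p associated to `F : [0,1] → ℂ`. -/
noncomputable def radial (p : ℕ) [Fact p.Prime] (F : Set.Icc (0:ℝ) 1 → ℂ)
    (x : ℤ_[p]) : ℂ :=
  F ⟨‖x‖, ⟨norm_nonneg x, PadicInt.norm_le_one x⟩⟩

lemma pow_mem_Icc (p : ℕ) [Fact p.Prime] (j : ℕ) :
    ((p:ℝ))^(-(j:ℤ)) ∈ Set.Icc (0:ℝ) 1 := by
  have hp : (1:ℝ) ≤ p := by exact_mod_cast (Fact.out : p.Prime).one_le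
  exact ⟨by positivity, zpow_le_one_of_nonpos₀ hp (by simp)⟩

/-- The value F(p^{-j}). -/
noncomputable def Fval (p : ℕ) [Fact p.Prime] (F : Set.Icc (0:ℝ) 1 → ℂ) (j : ℕ) : ℂ :=
  F ⟨(p:ℝ)^(-(j:ℤ)), pow_mem_Icc p j⟩

/-- The sphere of radius p^{-j} centered at the origin in ℤ_p. -/
def sphereZp (p : ℕ) [Fact p.Prime] (j : ℕ) : Set ℤ_[p] :=
  {x : ℤ_[p] | ‖x‖ = (p:ℝ)^(-(j:ℤ))}

/-- The ball {x : |x|_p ≤ p^{-m}} in ℤ_p. -/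
def ballZp (p : ℕ) [Fact p.Prime] (m : ℕ) : Set ℤ_[p] :=
  {x : ℤ_[p] | ‖x‖ ≤ (p:ℝ)^(-(m:ℤ))}

instance haarZp_isHaar (p : ℕ) [Fact p.Prime] : (haarZp p).IsAddHaarMeasure := by
  unfold haarZp; infer_instance
instance haarZp_neg (p : ℕ) [Fact p.Prime] : (haarZp p).IsNegInvariant := by
  unfold haarZp; infer_instance
instance haarZp_right (p : ℕ) [Fact p.Prime] : (haarZp p).IsAddRightInvariant := by
  unfold haarZp; infer_instance

lemma ballZp_measurable (p : ℕ) [Fact p.Prime] (m : ℕ) : MeasurableSet (ballZp p m) :=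
  (isClosed_le (continuous_norm) continuous_const).measurableSet

lemma measure_ballZp (p : ℕ) [Fact p.Prime] (n : ℕ) :
    haarZp p (ballZp p n) = ((p : ℝ≥0∞) ^ n)⁻¹ := by
  have hp : p.Prime := Fact.out
  set B := ballZp p n with hBdef
  set A : ℕ → Set ℤ_[p] := fun k => (fun x : ℤ_[p] => x + (-(k : ℤ_[p]))) ⁻¹' B with hA
  have hAmeas : ∀ k, MeasurableSet (A k) := fun k =>
    (ballZp_measurable p n).preimage (measurable_id.add_const _)
  have hAmem : ∀ (k : ℕ) (x : ℤ_[p]), x ∈ A k ↔ ‖x - (k:ℤ_[p])‖ ≤ (p:ℝ)^(-(n:ℤ)) := by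
    intro k x; simp [hA, hBdef, ballZp, sub_eq_add_neg]
  have hAμ : ∀ k, haarZp p (A k) = haarZp p B := fun k =>
    measure_preimage_add_right (haarZp p) _ B
  have hcover : Set.univ = ⋃ k ∈ Finset.range (p ^ n), A k := by
    refine Set.eq_of_subset_of_subset (fun x _ => ?_) (Set.subset_univ _)
    refine Set.mem_biUnion (Finset.mem_range.2 (x.appr_lt n)) ?_
    rw [hAmem]
    exact ((x - x.appr n).norm_le_pow_iff_mem_span_pow n).2 (x.appr_spec n)
  have hdisj : (↑(Finset.range (p ^ n)) : Set ℕ).Pairwise (Function.onFun Disjoint A) := by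
    intro k hk l hl hkl
    rw [Function.onFun, Set.disjoint_left]
    intro x hxk hxl
    apply hkl
    have h1 := (hAmem k x).1 hxk
    have h2 := (hAmem l x).1 hxl
    have hnorm : ‖((((k : ℤ) - l : ℤ)) : ℤ_[p])‖ ≤ (p:ℝ)^(-(n:ℤ)) := by
      have heq : ((((k : ℤ) - l : ℤ)) : ℤ_[p]) = (x - (l:ℤ_[p])) - (x - (k:ℤ_[p])) := by
        push_cast; ring
      rw [heq]
      calc ‖(x - (l:ℤ_[p])) - (x - (k:ℤ_[p]))‖
          ≤ max ‖x - (l:ℤ_[p])‖ ‖x - (k:ℤ_[p])‖ := by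
            have h := PadicInt.nonarchimedean (x - (l:ℤ_[p])) (-(x - (k:ℤ_[p])))
            rw [norm_neg] at h
            simpa [sub_eq_add_neg] using h
        _ ≤ (p:ℝ)^(-(n:ℤ)) := max_le h2 h1
    have hdvd : ((p:ℤ) ^ n) ∣ ((k : ℤ) - l) := by
      rwa [PadicInt.norm_int_le_pow_iff_dvd] at hnorm
    have : ((k:ℤ) - l) = 0 := by
      refine Int.eq_zero_of_abs_lt_dvd hdvd ?_
      have hk' : (k:ℤ) < (p:ℤ)^n := by exact_mod_cast Finset.mem_range.1 hk
      have hl' : (l:ℤ) < (p:ℤ)^n := by exact_mod_cast Finset.mem_range.1 hl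
      rw [abs_sub_lt_iff]
      omega
    omega
  have hsum : haarZp p (⋃ k ∈ Finset.range (p ^ n), A k)
      = ∑ k ∈ Finset.range (p ^ n), haarZp p (A k) :=
    measure_biUnion_finset hdisj fun k _ => hAmeas k
  have h1 : (1 : ℝ≥0∞) = ((p:ℝ≥0∞) ^ n) * haarZp p B := by
    have := Measure.addHaarMeasure_self
      (K₀ := (⟨⟨Set.univ, isCompact_univ⟩, by simp⟩ : TopologicalSpace.PositiveCompacts ℤ_[p]))
    calc (1 : ℝ≥0∞) = haarZp p Set.univ := this.symm
      _ = ∑ k ∈ Finset.range (p ^ n), haarZp p (A k) := by rw [hcover, hsum]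
      _ = ((p:ℝ≥0∞) ^ n) * haarZp p B := by
          simp [hAμ, Finset.sum_const, nsmul_eq_mul, Nat.cast_pow, mul_comm]
  have hne : ((p:ℝ≥0∞) ^ n) ≠ 0 := by
    simp [pow_ne_zero, Nat.cast_ne_zero, hp.ne_zero]
  have htop : ((p:ℝ≥0∞) ^ n) ≠ ⊤ := by
    simp [ENNReal.pow_ne_top, ENNReal.natCast_ne_top]
  calc haarZp p B = ((p:ℝ≥0∞)^n)⁻¹ * (((p:ℝ≥0∞)^n) * haarZp p B) := by
        rw [← mul_assoc, ENNReal.inv_mul_cancel hne htop, one_mul]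
    _ = ((p:ℝ≥0∞)^n)⁻¹ := by rw [← h1, mul_one]

theorem stmt10 (p : ℕ) [Fact p.Prime] (M : ℕ) (hM : 1 ≤ M)
    (F : Set.Icc (0:ℝ) 1 → ℂ) (hF : Continuous F) (x : ℤ_[p]) :
    (∫ y, radial p F (x - y) * Set.indicator (ballZp p (M+1)) (fun _ => (1:ℂ)) y
        ∂(haarZp p)) =
      (∫ y in ballZp p (M+1), radial p F y ∂(haarZp p)) *
          Set.indicator (ballZp p (M+1)) (fun _ => (1:ℂ)) x +
        (p:ℂ)^(-((M:ℤ)+1)) * ∑ j ∈ Finset.range (M+1),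
          Fval p F j * Set.indicator (sphereZp p j) (fun _ => (1:ℂ)) x := by
  have hp : p.Prime := Fact.out
  have hp1 : (1:ℝ) < p := by exact_mod_cast hp.one_lt
  set B := ballZp p (M+1) with hBdef
  have hBmeas : MeasurableSet B := ballZp_measurable p (M+1)
  have hsubB : ∀ a b : ℤ_[p], a ∈ B → b ∈ B → a - b ∈ B := by
    intro a b ha hb
    have h := PadicInt.nonarchimedean a (-b)
    rw [norm_neg] at h
    have h2 : ‖a - b‖ ≤ max ‖a‖ ‖b‖ := by simpa [sub_eq_add_neg] using h
    exact le_trans h2 (max_le ha hb)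
  have hstep : (∫ y, radial p F (x - y) * Set.indicator B (fun _ => (1:ℂ)) y ∂(haarZp p))
      = ∫ y in B, radial p F (x - y) ∂(haarZp p) := by
    rw [← integral_indicator hBmeas]
    congr 1
    funext y
    by_cases hy : y ∈ B <;> simp [Set.indicator, hy]
  rw [hstep]
  by_cases hx : x ∈ B
  · -- x in the small ball
    have hsph : ∀ j ∈ Finset.range (M+1),
        Fval p F j * Set.indicator (sphereZp p j) (fun _ => (1:ℂ)) x = 0 := by
      intro j hj
      have hjlt := Finset.mem_range.1 hj
      have hns : x ∉ sphereZp p j := by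
        intro hxs
        have h2 : (p:ℝ)^(-(j:ℤ)) ≤ (p:ℝ)^(-((M+1:ℕ):ℤ)) := by
          rw [← hxs]; exact hx
        have h3 : (p:ℝ)^(-((M+1:ℕ):ℤ)) < (p:ℝ)^(-(j:ℤ)) := by
          apply zpow_lt_zpow_right₀ hp1
          push_cast; omega
        linarith
      simp [Set.indicator, hns]
    rw [Finset.sum_congr rfl hsph]
    simp only [Finset.sum_const_zero, mul_zero, add_zero]
    rw [Set.indicator_of_mem hx, mul_one]
    have hmem_iff : ∀ y : ℤ_[p], x - y ∈ B ↔ y ∈ B := by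
      intro y
      constructor
      · intro h
        have := hsubB x (x - y) hx h
        simpa using this
      · intro h; exact hsubB x y hx h
    calc ∫ y in B, radial p F (x - y) ∂(haarZp p)
        = ∫ y, Set.indicator B (radial p F) (x - y) ∂(haarZp p) := by
          rw [← integral_indicator hBmeas]
          congr 1; funext y
          by_cases hy : y ∈ B
          · rw [Set.indicator_of_mem hy, Set.indicator_of_mem ((hmem_iff y).2 hy)]
          · rw [Set.indicator_of_notMem hy,
              Set.indicator_of_notMem (fun h => hy ((hmem_iff y).1 h))]
      _ = ∫ y, Set.indicator B (radial p F) y ∂(haarZp p) :=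
          integral_sub_left_eq_self _ _ x
      _ = ∫ y in B, radial p F y ∂(haarZp p) := integral_indicator hBmeas
  · -- x outside the small ball
    have hx0 : x ≠ 0 := by
      intro h
      apply hx
      show ‖x‖ ≤ (p:ℝ)^(-((M+1:ℕ):ℤ))
      rw [h, norm_zero]
      positivity
    set j := x.valuation with hjdef
    have hjz : (j:ℤ) = x.valuation := rfl
    have hnorm : ‖x‖ = (p:ℝ)^(-(j:ℤ)) := by
      rw [PadicInt.norm_eq_zpow_neg_valuation hx0]
    have hxgt : (p:ℝ)^(-((M+1:ℕ):ℤ)) < ‖x‖ := by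
      have : ¬ (‖x‖ ≤ (p:ℝ)^(-((M+1:ℕ):ℤ))) := hx
      linarith [not_le.1 this]
    have hjlt : j < M + 1 := by
      by_contra h
      push_neg at h
      apply hx
      show ‖x‖ ≤ (p:ℝ)^(-((M+1:ℕ):ℤ))
      rw [hnorm]
      apply zpow_le_zpow_right₀ hp1.le
      push_cast; omega
    have hconst : Set.EqOn (fun y => radial p F (x - y)) (fun _ => Fval p F j) B := by
      intro y hy
      have hylt : ‖y‖ < ‖x‖ := lt_of_le_of_lt hy hxgt
      have h1 : ‖x - y‖ = ‖x‖ := by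
        apply le_antisymm
        · have h := PadicInt.nonarchimedean x (-y)
          rw [norm_neg] at h
          have h2 : ‖x - y‖ ≤ max ‖x‖ ‖y‖ := by simpa [sub_eq_add_neg] using h
          simpa [max_eq_left hylt.le] using h2
        · have h2 : ‖x‖ ≤ max ‖x - y‖ ‖y‖ := by
            have hxy : x = (x - y) + y := by ring
            calc ‖x‖ = ‖(x - y) + y‖ := by rw [← hxy]
              _ ≤ max ‖x - y‖ ‖y‖ := PadicInt.nonarchimedean _ _
          rcases le_max_iff.1 h2 with h3 | h3
          · exact h3
          · exact absurd h3 (not_le.2 hylt)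
      show radial p F (x - y) = Fval p F j
      unfold radial Fval
      exact congrArg F (Subtype.ext (by show ‖x - y‖ = _; rw [h1, hnorm]))
    rw [setIntegral_congr_fun hBmeas hconst, setIntegral_const]
    have hμ : (haarZp p B).toReal = (p:ℝ)^(-((M+1:ℕ):ℤ)) := by
      rw [hBdef, measure_ballZp]
      rw [ENNReal.toReal_inv]
      rw [show ((p:ℝ≥0∞) ^ (M+1)).toReal = (p:ℝ)^(M+1) by simp [ENNReal.toReal_pow]]
      rw [zpow_neg, zpow_natCast]
    have hsum : ∑ j' ∈ Finset.range (M+1),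
        Fval p F j' * Set.indicator (sphereZp p j') (fun _ => (1:ℂ)) x = Fval p F j := by
      rw [Finset.sum_eq_single j]
      · rw [Set.indicator_of_mem (show x ∈ sphereZp p j from hnorm), mul_one]
      · intro b hb hbj
        have hns : x ∉ sphereZp p b := by
          intro hmem
          apply hbj
          have heq : (p:ℝ)^(-(b:ℤ)) = (p:ℝ)^(-(j:ℤ)) := by
            rw [← hmem, hnorm]
          rcases lt_trichotomy b j with h | h | h
          · have := zpow_lt_zpow_right₀ hp1 (show (-(j:ℤ)) < -(b:ℤ) by omega)
            linarith
          · exact h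
          · have := zpow_lt_zpow_right₀ hp1 (show (-(b:ℤ)) < -(j:ℤ) by omega)
            linarith
        simp [Set.indicator, hns]
      · intro hj'
        exact absurd (Finset.mem_range.2 hjlt) hj'
    rw [hsum, Set.indicator_of_notMem hx, mul_zero, zero_add, measureReal_def, hμ]
    rw [Complex.real_smul]
    congr 1
    rw [Complex.ofReal_zpow]
    push_cast
    ring
end

section
/- Let p be a prime, M ≥ 0 an integer, and F : [0,1] → ℂ continuous, viewed radially on ℤ_p. The (M+2)-dimensional complex vector space R_M(ℤ_p) spanned by 1_{S_0}, …, 1_{S_{-M}}, Ω(p^{M+1}|·|_p) is invariant under the convolution operator g ↦ F(|·|_p) * g. -/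
open MeasureTheory

/-- The basis family: indicators of the spheres S_0, …, S_{-M} and of the ball
{|x|_p ≤ p^{-M-1}}. -/
noncomputable def fam (p : ℕ) [Fact p.Prime] (M : ℕ) (i : Fin (M + 2)) :
    ℤ_[p] → ℂ :=
  if (i : ℕ) ≤ M then Set.indicator (sphereZp p i) (fun _ => (1:ℂ))
  else Set.indicator (ballZp p (M+1)) (fun _ => (1:ℂ))

namespace Stmt15Aux

open MeasureTheory

variable {p : ℕ} [Fact p.Prime] {M : ℕ}

instance : (haarZp p).IsAddHaarMeasure := by unfold haarZp; infer_instance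

lemma one_lt_p : (1:ℝ) < p := by exact_mod_cast (Fact.out : p.Prime).one_lt

lemma haarZp_univ : haarZp p Set.univ = 1 := by
  simpa [haarZp] using
    Measure.addHaarMeasure_self (K₀ := (⟨⟨Set.univ, isCompact_univ⟩, by simp⟩ :
      TopologicalSpace.PositiveCompacts ℤ_[p]))

open Classical in
/-- class index: which basis piece `x` belongs to. -/
noncomputable def nIdx (M : ℕ) (x : ℤ_[p]) : ℕ :=
  if x = 0 then M + 1 else min (x.valuation : ℤ).natAbs (M + 1)

lemma nIdx_le (x : ℤ_[p]) : nIdx M x ≤ M + 1 := by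
  unfold nIdx; split <;> omega

lemma nIdx_eq_of_norm_sphere {x : ℤ_[p]} {j : ℕ} (hj : j ≤ M)
    (h : ‖x‖ = (p:ℝ) ^ (-(j:ℤ))) : nIdx M x = j := by
  have hx : x ≠ 0 := by
    intro h0
    rw [h0, norm_zero] at h
    exact absurd h.symm (ne_of_gt (zpow_pos (by linarith [one_lt_p (p := p)]) _))
  have hval : x.valuation = (j:ℤ) := by
    have := (PadicInt.norm_eq_zpow_neg_valuation hx).symm.trans h
    have hinj := (zpow_right_strictMono₀ (one_lt_p (p := p))).injective this
    omega
  unfold nIdx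
  rw [if_neg hx, hval]
  simp [Int.natAbs_natCast]
  omega

lemma nIdx_eq_of_norm_ball {x : ℤ_[p]} (h : ‖x‖ ≤ (p:ℝ) ^ (-((M:ℤ)+1))) :
    nIdx M x = M + 1 := by
  by_cases hx : x = 0
  · unfold nIdx; rw [if_pos hx]
  · have hval : ((M:ℤ)+1) ≤ x.valuation := by
      have := (PadicInt.norm_eq_zpow_neg_valuation hx) ▸ h
      have := (zpow_le_zpow_iff_right₀ (one_lt_p (p := p))).mp this
      omega
    have hnn : (0:ℤ) ≤ x.valuation := by positivity
    unfold nIdx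
    rw [if_neg hx]
    omega

lemma norm_nIdx_le {x : ℤ_[p]} (h : nIdx M x ≤ M) :
    ‖x‖ = (p:ℝ) ^ (-(nIdx M x : ℤ)) := by
  have hx : x ≠ 0 := by
    intro h0; unfold nIdx at h; rw [if_pos h0] at h; omega
  have hval : x.valuation = (nIdx M x : ℤ) := by
    unfold nIdx at h ⊢
    rw [if_neg hx] at h ⊢
    have hnn : (0:ℤ) ≤ x.valuation := by positivity
    omega
  rw [PadicInt.norm_eq_zpow_neg_valuation hx, hval]

lemma norm_nIdx_top {x : ℤ_[p]} (h : nIdx M x = M + 1) :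
    ‖x‖ ≤ (p:ℝ) ^ (-((M:ℤ)+1)) := by
  by_cases hx : x = 0
  · rw [hx, norm_zero]; positivity
  · have hval : ((M:ℤ)+1) ≤ x.valuation := by
      unfold nIdx at h
      rw [if_neg hx] at h
      have hnn : (0:ℤ) ≤ x.valuation := by positivity
      omega
    rw [PadicInt.norm_eq_zpow_neg_valuation hx]
    exact (zpow_le_zpow_iff_right₀ (one_lt_p (p := p))).mpr (by omega)

lemma nIdx_norm_congr {x y : ℤ_[p]} (h : ‖x‖ = ‖y‖) : nIdx M x = nIdx M y := by
  rcases Nat.lt_or_ge (nIdx M x) (M+1) with hj | hj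
  · have h1 : ‖y‖ = (p:ℝ) ^ (-(nIdx M x : ℤ)) := by
      rw [← h]; exact norm_nIdx_le (by omega)
    exact (nIdx_eq_of_norm_sphere (by omega) h1).symm
  · have hx : nIdx M x = M + 1 := le_antisymm (nIdx_le x) hj
    have h1 : ‖y‖ ≤ (p:ℝ) ^ (-((M:ℤ)+1)) := by
      rw [← h]; exact norm_nIdx_top hx
    rw [hx, nIdx_eq_of_norm_ball h1]

lemma famApply (i : Fin (M+2)) (x : ℤ_[p]) :
    fam p M i x = if (i:ℕ) = nIdx M x then 1 else 0 := by
  unfold fam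
  by_cases hi : (i:ℕ) ≤ M
  · rw [if_pos hi]
    by_cases hx : (i:ℕ) = nIdx M x
    · rw [if_pos hx]
      have : x ∈ sphereZp p i := by
        show ‖x‖ = _
        rw [norm_nIdx_le (by omega : nIdx M x ≤ M), ← hx]
      simp [Set.indicator_of_mem this]
    · rw [if_neg hx]
      have : x ∉ sphereZp p i := by
        intro hmem
        exact hx (nIdx_eq_of_norm_sphere hi hmem).symm
      simp [Set.indicator_of_notMem this]
  · rw [if_neg hi]
    have hi' : (i:ℕ) = M + 1 := by have := i.isLt; omega
    by_cases hx : (i:ℕ) = nIdx M x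
    · rw [if_pos hx]
      have : x ∈ ballZp p (M+1) := by
        show ‖x‖ ≤ _
        have h2 := norm_nIdx_top (M := M) (x := x) (by omega)
        calc ‖x‖ ≤ (p:ℝ) ^ (-((M:ℤ)+1)) := h2
          _ = (p:ℝ) ^ (-((M+1:ℕ):ℤ)) := by congr 1
      simp [Set.indicator_of_mem this]
    · rw [if_neg hx]
      have : x ∉ ballZp p (M+1) := by
        intro hmem
        have hb : ‖x‖ ≤ (p:ℝ) ^ (-((M:ℤ)+1)) := by
          have h3 : ‖x‖ ≤ (p:ℝ) ^ (-((M+1:ℕ):ℤ)) := hmem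
          calc ‖x‖ ≤ (p:ℝ) ^ (-((M+1:ℕ):ℤ)) := h3
            _ = (p:ℝ) ^ (-((M:ℤ)+1)) := by congr 1
        exact hx (hi' ▸ (nIdx_eq_of_norm_ball hb).symm)
      simp [Set.indicator_of_notMem this]

lemma classFun_mem_span (h : ℤ_[p] → ℂ)
    (hc : ∀ x y, nIdx M x = nIdx M y → h x = h y) :
    h ∈ Submodule.span ℂ (Set.range (fam p M)) := by
  have hni : ∀ i : Fin (M+2), nIdx M ((p:ℤ_[p]) ^ (i:ℕ)) = (i:ℕ) := by
    intro i
    have hn : ‖(p:ℤ_[p]) ^ (i:ℕ)‖ = (p:ℝ) ^ (-((i:ℕ):ℤ)) := PadicInt.norm_p_pow _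
    rcases Nat.lt_or_ge (i:ℕ) (M+1) with hi | hi
    · exact nIdx_eq_of_norm_sphere (by omega) hn
    · have hieq : (i:ℕ) = M + 1 := by have := i.isLt; omega
      rw [hieq] at hn ⊢
      refine nIdx_eq_of_norm_ball (le_of_eq ?_)
      rw [hn]
      congr 1
  have hrep : h = ∑ i : Fin (M+2), h ((p:ℤ_[p]) ^ (i:ℕ)) • fam p M i := by
    funext x
    have hx : nIdx M x ≤ M + 1 := nIdx_le x
    set i0 : Fin (M+2) := ⟨nIdx M x, by omega⟩ with hi0
    rw [Finset.sum_apply]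
    rw [Finset.sum_eq_single i0]
    · have hfam : fam p M i0 x = 1 := by
        rw [famApply]
        exact if_pos rfl
      rw [Pi.smul_apply, hfam, smul_eq_mul, mul_one]
      exact hc _ _ (by rw [hni i0])
    · intro i _ hne
      have hfam : fam p M i x = 0 := by
        rw [famApply]
        exact if_neg fun hcon => hne (Fin.ext hcon)
      rw [Pi.smul_apply, hfam, smul_eq_mul, mul_zero]
    · intro hcon
      exact absurd (Finset.mem_univ i0) hcon
  rw [hrep]
  exact Submodule.sum_mem _ fun i _ =>
    Submodule.smul_mem _ _ (Submodule.subset_span ⟨i, rfl⟩)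

lemma span_classFun {g : ℤ_[p] → ℂ}
    (hg : g ∈ Submodule.span ℂ (Set.range (fam p M))) :
    ∀ x y, nIdx M x = nIdx M y → g x = g y := by
  induction hg using Submodule.span_induction with
  | mem f hf =>
    obtain ⟨i, rfl⟩ := hf
    intro x y hxy
    rw [famApply, famApply, hxy]
  | zero => intro x y _; rfl
  | add f1 f2 _ _ h1 h2 =>
    intro x y hxy
    simp only [Pi.add_apply, h1 x y hxy, h2 x y hxy]
  | smul c f _ h1 =>
    intro x y hxy
    simp only [Pi.smul_apply, h1 x y hxy]

/-- Multiplication by a unit as a homeomorphism. -/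
noncomputable def unitHomeo (u : ℤ_[p]ˣ) : ℤ_[p] ≃ₜ ℤ_[p] where
  toFun y := (u : ℤ_[p]) * y
  invFun y := ((u⁻¹ : ℤ_[p]ˣ) : ℤ_[p]) * y
  left_inv y := u.inv_mul_cancel_left y
  right_inv y := u.mul_inv_cancel_left y
  continuous_toFun := continuous_const.mul continuous_id
  continuous_invFun := continuous_const.mul continuous_id

lemma mp_unit (u : ℤ_[p]ˣ) :
    MeasurePreserving (fun y => (u : ℤ_[p]) * y) (haarZp p) (haarZp p) := by
  have hm : Measurable fun y : ℤ_[p] => (u : ℤ_[p]) * y := measurable_const_mul _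
  set K : TopologicalSpace.PositiveCompacts ℤ_[p] := ⟨⟨Set.univ, isCompact_univ⟩, by simp⟩
    with hK
  have hsurj : Function.Surjective fun y : ℤ_[p] => (u : ℤ_[p]) * y := fun z =>
    ⟨((u⁻¹ : ℤ_[p]ˣ) : ℤ_[p]) * z, u.mul_inv_cancel_left z⟩
  have hinv : Measure.IsAddLeftInvariant ((haarZp p).map fun y => (u : ℤ_[p]) * y) :=
    MeasureTheory.isAddLeftInvariant_map
      ⟨fun y => (u : ℤ_[p]) * y, fun a b => mul_add _ a b⟩ hm hsurj
  have huniv : ((haarZp p).map fun y => (u : ℤ_[p]) * y) Set.univ = 1 := by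
    rw [Measure.map_apply hm MeasurableSet.univ, Set.preimage_univ, haarZp_univ]
  have hfin : IsFiniteMeasure ((haarZp p).map fun y => (u : ℤ_[p]) * y) :=
    ⟨by rw [huniv]; exact ENNReal.one_lt_top⟩
  refine ⟨hm, ?_⟩
  have huniq := Measure.addHaarMeasure_unique
    ((haarZp p).map fun y => (u : ℤ_[p]) * y) K
  have hKval : ((haarZp p).map fun y => (u : ℤ_[p]) * y) (K : Set ℤ_[p]) = 1 := huniv
  rw [huniq, hKval, one_smul]
  rfl

lemma radial_congr {F : Set.Icc (0:ℝ) 1 → ℂ} {a b : ℤ_[p]} (h : ‖a‖ = ‖b‖) :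
    radial p F a = radial p F b := by
  unfold radial
  congr 1
  exact Subtype.ext h

lemma norm_unit_mul (u : ℤ_[p]ˣ) (z : ℤ_[p]) : ‖(u : ℤ_[p]) * z‖ = ‖z‖ := by
  rw [norm_mul, PadicInt.isUnit_iff.mp u.isUnit, one_mul]

lemma nIdx_add_small {x t : ℤ_[p]} (ht : ‖t‖ ≤ (p:ℝ) ^ (-((M:ℤ)+1))) :
    nIdx M (x + t) = nIdx M x := by
  rcases Nat.lt_or_ge (nIdx M x) (M+1) with hj | hj
  · have hnx := norm_nIdx_le (M := M) (x := x) (by omega)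
    have hlt : ‖t‖ < ‖x‖ := by
      rw [hnx]
      refine lt_of_le_of_lt ht ?_
      exact (zpow_lt_zpow_iff_right₀ (one_lt_p (p := p))).mpr (by omega)
    have hsum : ‖x + t‖ = ‖x‖ := by
      rw [PadicInt.norm_add_eq_max_of_ne (ne_of_gt hlt)]
      exact max_eq_left hlt.le
    exact nIdx_eq_of_norm_sphere (by omega) (hsum.trans hnx)
  · have hx : nIdx M x = M + 1 := le_antisymm (nIdx_le x) hj
    have hnx := norm_nIdx_top hx
    have : ‖x + t‖ ≤ (p:ℝ) ^ (-((M:ℤ)+1)) :=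
      le_trans (PadicInt.nonarchimedean x t) (max_le hnx ht)
    rw [nIdx_eq_of_norm_ball this, hx]

end Stmt15Aux

theorem stmt15 (p : ℕ) [Fact p.Prime] (M : ℕ)
    (F : Set.Icc (0:ℝ) 1 → ℂ) (hF : Continuous F)
    (g : ℤ_[p] → ℂ) (hg : g ∈ Submodule.span ℂ (Set.range (fam p M))) :
    (fun x => ∫ y, radial p F (x - y) * g y ∂(haarZp p)) ∈
      Submodule.span ℂ (Set.range (fam p M)) := by
  classical
  apply Stmt15Aux.classFun_mem_span
  intro x x' hxx'
  have gcl := Stmt15Aux.span_classFun hg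
  show (∫ y, radial p F (x - y) * g y ∂haarZp p)
      = ∫ y, radial p F (x' - y) * g y ∂haarZp p
  rcases Nat.lt_or_ge (Stmt15Aux.nIdx M x) (M+1) with hj | hj
  · -- sphere case
    have hnx : ‖x‖ = (p:ℝ) ^ (-(Stmt15Aux.nIdx M x : ℤ)) :=
      Stmt15Aux.norm_nIdx_le (by omega)
    have hnx' : ‖x'‖ = (p:ℝ) ^ (-(Stmt15Aux.nIdx M x : ℤ)) := by
      rw [hxx']
      exact Stmt15Aux.norm_nIdx_le (by omega)
    have hpos : (0:ℝ) < (p:ℝ) ^ (-(Stmt15Aux.nIdx M x : ℤ)) :=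
      zpow_pos (by exact_mod_cast (Fact.out : p.Prime).pos) _
    have hx0 : x ≠ 0 := by
      intro h0
      rw [← hnx, h0, norm_zero] at hpos
      exact lt_irrefl _ hpos
    have hx'0 : x' ≠ 0 := by
      intro h0
      rw [← hnx', h0, norm_zero] at hpos
      exact lt_irrefl _ hpos
    have hval : x'.valuation = x.valuation := by
      have h1 : (p:ℝ) ^ (-(x'.valuation:ℤ)) = (p:ℝ) ^ (-(x.valuation:ℤ)) := by
        rw [← PadicInt.norm_eq_zpow_neg_valuation hx'0, ← PadicInt.norm_eq_zpow_neg_valuation hx0, hnx, hnx']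
      have h2 := (zpow_right_strictMono₀ (Stmt15Aux.one_lt_p (p := p))).injective h1
      omega
    set u : ℤ_[p]ˣ := PadicInt.unitCoeff hx'0 * (PadicInt.unitCoeff hx0)⁻¹ with hu
    have hux : (u : ℤ_[p]) * x = x' := by
      have h1 := PadicInt.unitCoeff_spec hx0
      have h2 := PadicInt.unitCoeff_spec hx'0
      have hnat : x.valuation = x'.valuation := by rw [hval]
      calc (u : ℤ_[p]) * x
          = ↑(PadicInt.unitCoeff hx'0) * (↑(PadicInt.unitCoeff hx0)⁻¹ *
            (↑(PadicInt.unitCoeff hx0) * (p:ℤ_[p]) ^ x.valuation)) := by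
            rw [hu, Units.val_mul, mul_assoc, ← h1]
        _ = ↑(PadicInt.unitCoeff hx'0) * (p:ℤ_[p]) ^ x'.valuation := by
            rw [Units.inv_mul_cancel_left, hnat]
        _ = x' := h2.symm
    have key := (Stmt15Aux.mp_unit u).integral_comp
      (Stmt15Aux.unitHomeo u).measurableEmbedding
      (fun y => radial p F (x' - y) * g y)
    have hptw : ∀ y : ℤ_[p], radial p F (x' - (u:ℤ_[p]) * y) * g ((u:ℤ_[p]) * y)
        = radial p F (x - y) * g y := by
      intro y
      have h1 : x' - (u:ℤ_[p]) * y = (u:ℤ_[p]) * (x - y) := by rw [← hux]; ring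
      have h2 : g ((u:ℤ_[p]) * y) = g y :=
        gcl _ _ (Stmt15Aux.nIdx_norm_congr (Stmt15Aux.norm_unit_mul u y))
      rw [h1, h2, Stmt15Aux.radial_congr (Stmt15Aux.norm_unit_mul u (x - y))]
    calc (∫ y, radial p F (x - y) * g y ∂haarZp p)
        = ∫ y, radial p F (x' - (u:ℤ_[p]) * y) * g ((u:ℤ_[p]) * y) ∂haarZp p :=
          (integral_congr_ae (Filter.Eventually.of_forall hptw)).symm
      _ = ∫ y, radial p F (x' - y) * g y ∂haarZp p := key
  · -- ball case
    have hxM : Stmt15Aux.nIdx M x = M + 1 := le_antisymm (Stmt15Aux.nIdx_le x) hj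
    have hx'M : Stmt15Aux.nIdx M x' = M + 1 := hxx' ▸ hxM
    have ht : ‖x' - x‖ ≤ (p:ℝ) ^ (-((M:ℤ)+1)) := by
      have h1 := Stmt15Aux.norm_nIdx_top hxM
      have h2 := Stmt15Aux.norm_nIdx_top hx'M
      calc ‖x' - x‖ = ‖x' + (-x)‖ := by rw [sub_eq_add_neg]
        _ ≤ max ‖x'‖ ‖(-x)‖ := PadicInt.nonarchimedean _ _
        _ ≤ _ := by rw [norm_neg]; exact max_le h2 h1
    have key := integral_add_right_eq_self (μ := haarZp p)
      (fun y => radial p F (x' - y) * g y) (x' - x)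
    have hptw : ∀ y : ℤ_[p], radial p F (x' - (y + (x' - x))) * g (y + (x' - x))
        = radial p F (x - y) * g y := by
      intro y
      have h1 : x' - (y + (x' - x)) = x - y := by ring
      have h2 : g (y + (x' - x)) = g y := gcl _ _ (Stmt15Aux.nIdx_add_small ht)
      rw [h1, h2]
    calc (∫ y, radial p F (x - y) * g y ∂haarZp p)
        = ∫ y, radial p F (x' - (y + (x' - x))) * g (y + (x' - x)) ∂haarZp p :=
          (integral_congr_ae (Filter.Eventually.of_forall hptw)).symm
      _ = ∫ y, radial p F (x' - y) * g y ∂haarZp p := key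
end
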